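/- Let O denote the differential operator O = ∂²/∂z₁∂z₄ − ∂²/∂z₂∂z₃ acting on ℂ[z₁,z₂,z₃,z₄]. For every γ = (γ₁,γ₂,γ₃,0) ∈ ℤ⁴ with last coordinate zero and every integer k ≥ 1, one has O((z₁z₄ − z₂z₃)^k · F_γ) = (k(k+1) + k(γ₁+γ₂+γ₃)) · (z₁z₄ − z₂z₃)^{k−1} · F_γ. -/

import Mathlib

open MvPolynomial Finset

/-- The hypergeometric Γ-series `F_γ` for the lattice `B = ℤ⟨(1,-1,-1,1)⟩`,
as a polynomial in `ℂ[z₁,z₂,z₃,z₄]`. -/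
noncomputable def GammaSeries (γ : Fin 4 → ℤ) : MvPolynomial (Fin 4) ℂ :=
  ∑ n ∈ Finset.Icc (max (-γ 0) (-γ 3)) (min (γ 1) (γ 2)),
    MvPolynomial.C ((((γ 0 + n).toNat.factorial * (γ 1 - n).toNat.factorial *
        (γ 2 - n).toNat.factorial * (γ 3 + n).toNat.factorial : ℕ) : ℂ))⁻¹ *
      (X 0 ^ (γ 0 + n).toNat * X 1 ^ (γ 1 - n).toNat *
        X 2 ^ (γ 2 - n).toNat * X 3 ^ (γ 3 + n).toNat)

/-- The hypergeometric operator `O = ∂²/∂z₁∂z₄ − ∂²/∂z₂∂z₃`. -/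
noncomputable def hypOp (p : MvPolynomial (Fin 4) ℂ) : MvPolynomial (Fin 4) ℂ :=
  pderiv 0 (pderiv 3 p) - pderiv 1 (pderiv 2 p)

/-! ### Auxiliary lemmas -/

lemma pd03 (co : ℂ) (a b c d : ℕ) :
    pderiv (0 : Fin 4) (pderiv 3 (C co * (X 0 ^ a * X 1 ^ b * X 2 ^ c * X 3 ^ d))) =
      C (co * a * d) * (X 0 ^ (a - 1) * X 1 ^ b * X 2 ^ c * X 3 ^ (d - 1)) := by
  simp only [pderiv_C_mul, pderiv_mul, pderiv_pow, pderiv_X_self,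
    pderiv_X_of_ne (by decide : (0:Fin 4) ≠ 3),
    pderiv_X_of_ne (by decide : (1:Fin 4) ≠ 3), pderiv_X_of_ne (by decide : (2:Fin 4) ≠ 3),
    pderiv_X_of_ne (by decide : (3:Fin 4) ≠ 0), pderiv_X_of_ne (by decide : (1:Fin 4) ≠ 0),
    pderiv_X_of_ne (by decide : (2:Fin 4) ≠ 0), mul_zero, zero_mul, add_zero, zero_add, mul_one,
    map_mul, map_natCast, pderiv_C, Derivation.map_natCast, mul_zero, zero_mul, add_zero]
  ring

lemma pd12 (co : ℂ) (a b c d : ℕ) :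
    pderiv (1 : Fin 4) (pderiv 2 (C co * (X 0 ^ a * X 1 ^ b * X 2 ^ c * X 3 ^ d))) =
      C (co * b * c) * (X 0 ^ a * X 1 ^ (b - 1) * X 2 ^ (c - 1) * X 3 ^ d) := by
  simp only [pderiv_C_mul, pderiv_mul, pderiv_pow, pderiv_X_self,
    pderiv_X_of_ne (by decide : (0:Fin 4) ≠ 2), pderiv_X_of_ne (by decide : (1:Fin 4) ≠ 2),
    pderiv_X_of_ne (by decide : (3:Fin 4) ≠ 2), pderiv_X_of_ne (by decide : (0:Fin 4) ≠ 1),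
    pderiv_X_of_ne (by decide : (2:Fin 4) ≠ 1), pderiv_X_of_ne (by decide : (3:Fin 4) ≠ 1),
    mul_zero, zero_mul, add_zero, zero_add, mul_one, map_mul, map_natCast, pderiv_C,
    Derivation.map_natCast]
  ring

lemma Xpd0 (co : ℂ) (a b c d : ℕ) :
    X 0 * pderiv (0 : Fin 4) (C co * (X 0 ^ a * X 1 ^ b * X 2 ^ c * X 3 ^ d)) =
      C (co * a) * (X 0 ^ a * X 1 ^ b * X 2 ^ c * X 3 ^ d) := by
  simp only [pderiv_C_mul, pderiv_mul, pderiv_pow, pderiv_X_self,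
    pderiv_X_of_ne (by decide : (1:Fin 4) ≠ 0), pderiv_X_of_ne (by decide : (2:Fin 4) ≠ 0),
    pderiv_X_of_ne (by decide : (3:Fin 4) ≠ 0),
    mul_zero, zero_mul, add_zero, zero_add, mul_one, map_mul, map_natCast, pderiv_C]
  cases a with
  | zero => simp
  | succ a => simp only [Nat.add_sub_cancel, pow_succ]; push_cast; ring

lemma Xpd1 (co : ℂ) (a b c d : ℕ) :
    X 1 * pderiv (1 : Fin 4) (C co * (X 0 ^ a * X 1 ^ b * X 2 ^ c * X 3 ^ d)) =
      C (co * b) * (X 0 ^ a * X 1 ^ b * X 2 ^ c * X 3 ^ d) := by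
  simp only [pderiv_C_mul, pderiv_mul, pderiv_pow, pderiv_X_self,
    pderiv_X_of_ne (by decide : (0:Fin 4) ≠ 1), pderiv_X_of_ne (by decide : (2:Fin 4) ≠ 1),
    pderiv_X_of_ne (by decide : (3:Fin 4) ≠ 1),
    mul_zero, zero_mul, add_zero, zero_add, mul_one, map_mul, map_natCast, pderiv_C]
  cases b with
  | zero => simp
  | succ b => simp only [Nat.add_sub_cancel, pow_succ]; push_cast; ring

lemma Xpd2 (co : ℂ) (a b c d : ℕ) :
    X 2 * pderiv (2 : Fin 4) (C co * (X 0 ^ a * X 1 ^ b * X 2 ^ c * X 3 ^ d)) =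
      C (co * c) * (X 0 ^ a * X 1 ^ b * X 2 ^ c * X 3 ^ d) := by
  simp only [pderiv_C_mul, pderiv_mul, pderiv_pow, pderiv_X_self,
    pderiv_X_of_ne (by decide : (0:Fin 4) ≠ 2), pderiv_X_of_ne (by decide : (1:Fin 4) ≠ 2),
    pderiv_X_of_ne (by decide : (3:Fin 4) ≠ 2),
    mul_zero, zero_mul, add_zero, zero_add, mul_one, map_mul, map_natCast, pderiv_C]
  cases c with
  | zero => simp
  | succ c => simp only [Nat.add_sub_cancel, pow_succ]; push_cast; ring

lemma Xpd3 (co : ℂ) (a b c d : ℕ) :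
    X 3 * pderiv (3 : Fin 4) (C co * (X 0 ^ a * X 1 ^ b * X 2 ^ c * X 3 ^ d)) =
      C (co * d) * (X 0 ^ a * X 1 ^ b * X 2 ^ c * X 3 ^ d) := by
  simp only [pderiv_C_mul, pderiv_mul, pderiv_pow, pderiv_X_self,
    pderiv_X_of_ne (by decide : (0:Fin 4) ≠ 3), pderiv_X_of_ne (by decide : (1:Fin 4) ≠ 3),
    pderiv_X_of_ne (by decide : (2:Fin 4) ≠ 3),
    mul_zero, zero_mul, add_zero, zero_add, mul_one, map_mul, map_natCast, pderiv_C]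
  cases d with
  | zero => simp
  | succ d => simp only [Nat.add_sub_cancel, pow_succ]; push_cast; ring

/-- Euler identity: the Γ-series is homogeneous of degree `γ₀+γ₁+γ₂+γ₃`. -/
lemma euler_gammaSeries (γ : Fin 4 → ℤ) :
    X 0 * pderiv 0 (GammaSeries γ) + X 1 * pderiv 1 (GammaSeries γ) +
      X 2 * pderiv 2 (GammaSeries γ) + X 3 * pderiv 3 (GammaSeries γ) =
      (((γ 0 + γ 1 + γ 2 + γ 3 : ℤ) : MvPolynomial (Fin 4) ℂ)) * GammaSeries γ := by
  unfold GammaSeries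
  rw [map_sum (pderiv 0), map_sum (pderiv 1), map_sum (pderiv 2), map_sum (pderiv 3)]
  simp only [Finset.mul_sum, ← Finset.sum_add_distrib]
  refine Finset.sum_congr rfl fun n hn => ?_
  rw [Xpd0, Xpd1, Xpd2, Xpd3]
  simp only [Finset.mem_Icc] at hn
  have h : ((γ 0 + n).toNat : ℤ) + (γ 1 - n).toNat + (γ 2 - n).toNat + (γ 3 + n).toNat
      = γ 0 + γ 1 + γ 2 + γ 3 := by omega
  have h2 : ((γ 0 + γ 1 + γ 2 + γ 3 : ℤ) : ℂ) =
      ((γ 0 + n).toNat : ℂ) + ((γ 1 - n).toNat : ℂ) + ((γ 2 - n).toNat : ℂ)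
        + ((γ 3 + n).toNat : ℂ) := by rw [← h]; push_cast; ring
  rw [show (((γ 0 + γ 1 + γ 2 + γ 3 : ℤ) : MvPolynomial (Fin 4) ℂ)) =
      C ((γ 0 + γ 1 + γ 2 + γ 3 : ℤ) : ℂ) by push_cast; simp]
  rw [h2]
  simp only [map_add, map_mul]
  ring

lemma sum_shift {M : Type*} [AddCommMonoid M] (L U : ℤ) (P Q : ℤ → M) (hP : P L = 0)
    (hQ : Q U = 0) (h : ∀ n, L ≤ n → n < U → P (n + 1) = Q n) :
    ∑ n ∈ Finset.Icc L U, P n = ∑ n ∈ Finset.Icc L U, Q n := by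
  rw [← Finset.sum_erase _ hP, ← Finset.sum_erase _ hQ, Finset.Icc_erase_left,
    Finset.Icc_erase_right]
  have hIoc : Ioc L U = (Ico L U).map (addRightEmbedding 1) := by
    rw [Finset.map_add_right_Ico]; ext x; simp
  rw [hIoc, Finset.sum_map]
  refine Finset.sum_congr rfl fun n hn => ?_
  simp only [Finset.mem_Ico] at hn
  simpa using h n hn.1 hn.2

/-- The Γ-series is annihilated by the hypergeometric operator. -/
lemma hypOp_gammaSeries (γ : Fin 4 → ℤ) : hypOp (GammaSeries γ) = 0 := by
  unfold hypOp GammaSeries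
  rw [map_sum (pderiv 3), map_sum (pderiv 0), map_sum (pderiv 2), map_sum (pderiv 1),
    sub_eq_zero]
  simp only [pd03, pd12]
  apply sum_shift
  · have h0 : (γ 0 + max (-γ 0) (-γ 3)).toNat = 0 ∨ (γ 3 + max (-γ 0) (-γ 3)).toNat = 0 := by
      rcases max_cases (-γ 0) (-γ 3) with ⟨h1, h2⟩ | ⟨h1, h2⟩ <;> omega
    rcases h0 with h | h <;> simp only [h] <;> simp
  · have h0 : (γ 1 - min (γ 1) (γ 2)).toNat = 0 ∨ (γ 2 - min (γ 1) (γ 2)).toNat = 0 := by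
      rcases min_cases (γ 1) (γ 2) with ⟨h1, h2⟩ | ⟨h1, h2⟩ <;> omega
    rcases h0 with h | h <;> simp [h]
  · intro n h1 h2
    have k1 : -γ 0 ≤ n := le_trans (le_max_left _ _) h1
    have k2 : -γ 3 ≤ n := le_trans (le_max_right _ _) h1
    have k3 : n < γ 1 := lt_of_lt_of_le h2 (min_le_left _ _)
    have k4 : n < γ 2 := lt_of_lt_of_le h2 (min_le_right _ _)
    set a := (γ 0 + n).toNat with ha
    set b := (γ 1 - (n + 1)).toNat with hb
    set c := (γ 2 - (n + 1)).toNat with hc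
    set d := (γ 3 + n).toNat with hd
    have e1 : (γ 0 + (n + 1)).toNat = a + 1 := by omega
    have e4 : (γ 3 + (n + 1)).toNat = d + 1 := by omega
    have e5 : (γ 1 - n).toNat = b + 1 := by omega
    have e6 : (γ 2 - n).toNat = c + 1 := by omega
    rw [e1, e4, e5, e6]
    simp only [Nat.add_sub_cancel]
    congr 1
    have hA : ((((a+1).factorial * b.factorial * c.factorial * (d+1).factorial : ℕ)) : ℂ) ≠ 0 :=
      Nat.cast_ne_zero.mpr (mul_ne_zero (mul_ne_zero (mul_ne_zero (a+1).factorial_ne_zero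
        b.factorial_ne_zero) c.factorial_ne_zero) (d+1).factorial_ne_zero)
    have hB : (((a.factorial * (b+1).factorial * (c+1).factorial * d.factorial : ℕ)) : ℂ) ≠ 0 :=
      Nat.cast_ne_zero.mpr (mul_ne_zero (mul_ne_zero (mul_ne_zero a.factorial_ne_zero
        (b+1).factorial_ne_zero) (c+1).factorial_ne_zero) d.factorial_ne_zero)
    have key : ((((a+1).factorial * b.factorial * c.factorial * (d+1).factorial : ℕ) : ℂ))⁻¹ *
          ((a+1 : ℕ) : ℂ) * ((d+1 : ℕ) : ℂ) =
        (((a.factorial * (b+1).factorial * (c+1).factorial * d.factorial : ℕ) : ℂ))⁻¹ *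
          ((b+1 : ℕ) : ℂ) * ((c+1 : ℕ) : ℂ) := by
      rw [mul_assoc ((((a+1).factorial * b.factorial * c.factorial *
            (d+1).factorial : ℕ) : ℂ))⁻¹, inv_mul_eq_div,
        mul_assoc (((a.factorial * (b+1).factorial * (c+1).factorial *
            d.factorial : ℕ) : ℂ))⁻¹, inv_mul_eq_div, div_eq_div_iff hA hB]
      simp only [Nat.factorial_succ]
      push_cast
      ring
    exact congrArg C key

/-- Leibniz rule for the hypergeometric operator. -/
lemma hypOp_mul (p q : MvPolynomial (Fin 4) ℂ) :
    hypOp (p * q) = hypOp p * q + p * hypOp q +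
      (pderiv 0 p * pderiv 3 q + pderiv 3 p * pderiv 0 q -
        pderiv 1 p * pderiv 2 q - pderiv 2 p * pderiv 1 q) := by
  simp only [hypOp, pderiv_mul, map_add, map_sub]
  ring

lemma pderiv0_g : pderiv (0 : Fin 4) (X 0 * X 3 - X 1 * X 2 : MvPolynomial (Fin 4) ℂ) = X 3 := by
  simp [pderiv_mul, pderiv_X_self, pderiv_X_of_ne (by decide : (3:Fin 4) ≠ 0),
    pderiv_X_of_ne (by decide : (1:Fin 4) ≠ 0), pderiv_X_of_ne (by decide : (2:Fin 4) ≠ 0)]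

lemma pderiv3_g : pderiv (3 : Fin 4) (X 0 * X 3 - X 1 * X 2 : MvPolynomial (Fin 4) ℂ) = X 0 := by
  simp [pderiv_mul, pderiv_X_self, pderiv_X_of_ne (by decide : (0:Fin 4) ≠ 3),
    pderiv_X_of_ne (by decide : (1:Fin 4) ≠ 3), pderiv_X_of_ne (by decide : (2:Fin 4) ≠ 3)]

lemma pderiv1_g : pderiv (1 : Fin 4) (X 0 * X 3 - X 1 * X 2 : MvPolynomial (Fin 4) ℂ) = -X 2 := by
  simp [pderiv_mul, pderiv_X_self, pderiv_X_of_ne (by decide : (0:Fin 4) ≠ 1),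
    pderiv_X_of_ne (by decide : (3:Fin 4) ≠ 1), pderiv_X_of_ne (by decide : (2:Fin 4) ≠ 1)]

lemma pderiv2_g : pderiv (2 : Fin 4) (X 0 * X 3 - X 1 * X 2 : MvPolynomial (Fin 4) ℂ) = -X 1 := by
  simp [pderiv_mul, pderiv_X_self, pderiv_X_of_ne (by decide : (0:Fin 4) ≠ 2),
    pderiv_X_of_ne (by decide : (3:Fin 4) ≠ 2), pderiv_X_of_ne (by decide : (1:Fin 4) ≠ 2)]

lemma hypOp_g : hypOp (X 0 * X 3 - X 1 * X 2 : MvPolynomial (Fin 4) ℂ) = 2 := by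
  simp only [hypOp, map_sub, pderiv_mul, pderiv_X_self,
    pderiv_X_of_ne (by decide : (0:Fin 4) ≠ 3), pderiv_X_of_ne (by decide : (1:Fin 4) ≠ 3),
    pderiv_X_of_ne (by decide : (2:Fin 4) ≠ 3), pderiv_X_of_ne (by decide : (3:Fin 4) ≠ 0),
    pderiv_X_of_ne (by decide : (1:Fin 4) ≠ 0), pderiv_X_of_ne (by decide : (2:Fin 4) ≠ 0),
    pderiv_X_of_ne (by decide : (0:Fin 4) ≠ 2), pderiv_X_of_ne (by decide : (1:Fin 4) ≠ 2),
    pderiv_X_of_ne (by decide : (3:Fin 4) ≠ 2), pderiv_X_of_ne (by decide : (0:Fin 4) ≠ 1),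
    pderiv_X_of_ne (by decide : (2:Fin 4) ≠ 1), pderiv_X_of_ne (by decide : (3:Fin 4) ≠ 1),
    pderiv_one, pderiv_C]
  simp
  exact one_add_one_eq_two

lemma hypOp_g_pow (m : ℕ) :
    hypOp ((X 0 * X 3 - X 1 * X 2 : MvPolynomial (Fin 4) ℂ) ^ (m + 1)) =
      (((m + 1) * (m + 2) : ℕ) : MvPolynomial (Fin 4) ℂ) * (X 0 * X 3 - X 1 * X 2) ^ m := by
  induction m with
  | zero =>
    rw [pow_one, hypOp_g]
    norm_num
  | succ m ih =>
    rw [show m + 1 + 1 = (m + 1) + 1 from rfl, pow_succ',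
      hypOp_mul, ih]
    rw [hypOp_g]
    simp only [pderiv_pow, Nat.add_sub_cancel, pderiv0_g, pderiv1_g, pderiv2_g, pderiv3_g]
    push_cast
    ring

/-- `O((z₁z₄ − z₂z₃)^k F_γ) = (k(k+1) + k(γ₁+γ₂+γ₃)) (z₁z₄ − z₂z₃)^{k−1} F_γ`. -/
theorem hypOp_pow_mul_gammaSeries (γ : Fin 4 → ℤ) (hγ : γ 3 = 0) (k : ℕ) (hk : 1 ≤ k) :
    hypOp ((X 0 * X 3 - X 1 * X 2) ^ k * GammaSeries γ) =
      C (((k * (k + 1) + k * (γ 0 + γ 1 + γ 2) : ℤ)) : ℂ) *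
        ((X 0 * X 3 - X 1 * X 2) ^ (k - 1) * GammaSeries γ) := by
  obtain ⟨m, rfl⟩ : ∃ m, k = m + 1 := ⟨k - 1, by omega⟩
  rw [hypOp_mul, hypOp_g_pow, hypOp_gammaSeries, mul_zero, add_zero]
  simp only [pderiv_pow, Nat.add_sub_cancel, pderiv0_g, pderiv1_g, pderiv2_g, pderiv3_g]
  have E := euler_gammaSeries γ
  rw [hγ, add_zero] at E
  have hC : C (((((m : ℤ) + 1) * ((m + 1) + 1) + ((m : ℤ) + 1) * (γ 0 + γ 1 + γ 2) : ℤ)) : ℂ)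
      = ((((m : ℤ) + 1) * ((m + 1) + 1) + ((m : ℤ) + 1) * (γ 0 + γ 1 + γ 2) : ℤ) :
        MvPolynomial (Fin 4) ℂ) := by
    rw [map_intCast]
  push_cast at hC E ⊢
  rw [hC]
  linear_combination (((m : MvPolynomial (Fin 4) ℂ) + 1) * (X 0 * X 3 - X 1 * X 2) ^ m) * E
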